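/- Let X_1,…,X_n, n ≥ 7, be i.i.d. with density f on [−L, 0) satisfying 0 < δ ≤ f ≤ Δ. Then E[ 1/(X_{(n)} − X_{(1)})⁴ ] < ∞, where X_{(1)} and X_{(n)} are the minimum and maximum order statistics. -/

import Mathlib

open MeasureTheory
open scoped Classical

/-- The `k`-th smallest value (0-indexed) among `ω 0, …, ω (n-1)`. -/
noncomputable def orderStat (n : ℕ) (k : ℕ) (ω : Fin n → ℝ) : ℝ :=
  ((List.ofFn ω).insertionSort (· ≤ ·)).getD k 0

lemma orderStat_facts {n : ℕ} (hn : 0 < n) (ω : Fin n → ℝ) :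
    (∀ i, (((List.ofFn ω).insertionSort (· ≤ ·)).getD 0 0 ≤ ω i ∧
      ω i ≤ ((List.ofFn ω).insertionSort (· ≤ ·)).getD (n-1) 0)) ∧
    (∃ i, ((List.ofFn ω).insertionSort (· ≤ ·)).getD 0 0 = ω i) ∧
    (∃ i, ((List.ofFn ω).insertionSort (· ≤ ·)).getD (n-1) 0 = ω i) := by
  set l := (List.ofFn ω).insertionSort (· ≤ ·) with hl
  have hperm : l.Perm (List.ofFn ω) := List.perm_insertionSort _ _
  have hsort : l.Pairwise (· ≤ ·) := List.pairwise_insertionSort _ _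
  have hlen : l.length = n := by rw [hperm.length_eq, List.length_ofFn]
  have h0 : (0:ℕ) < l.length := hlen ▸ hn
  have hn1 : n - 1 < l.length := by omega
  have hget0 : l.getD 0 0 = l.get ⟨0, h0⟩ := by
    rw [List.getD_eq_getElem l 0 h0]; rfl
  have hget1 : l.getD (n-1) 0 = l.get ⟨n-1, hn1⟩ := by
    rw [List.getD_eq_getElem l 0 hn1]; rfl
  have hmem : ∀ j : Fin l.length, ∃ i, l.get j = ω i := by
    intro j
    have : l.get j ∈ List.ofFn ω := hperm.mem_iff.mp (by simpa using l.get_mem j.1 j.2)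
    rcases List.mem_ofFn.mp this with ⟨i, hi⟩
    exact ⟨i, hi.symm⟩
  refine ⟨?_, ?_, ?_⟩
  · intro i
    have : ω i ∈ l := hperm.mem_iff.mpr (List.mem_ofFn.mpr ⟨i, rfl⟩)
    rcases List.mem_iff_get.mp this with ⟨j, hj⟩
    constructor
    · rw [hget0, ← hj]
      exact hsort.rel_get_of_le (by exact Fin.mk_le_mk.mpr (Nat.zero_le _))
    · rw [hget1, ← hj]
      exact hsort.rel_get_of_le (by exact Fin.mk_le_mk.mpr (by omega))
  · rw [hget0]; exact hmem _
  · rw [hget1]; exact hmem _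

lemma orderStat_min {n : ℕ} (hn : 0 < n) (ω : Fin n → ℝ) :
    haveI : Nonempty (Fin n) := ⟨⟨0, hn⟩⟩
    orderStat n 0 ω = Finset.univ.inf' Finset.univ_nonempty ω := by
  haveI : Nonempty (Fin n) := ⟨⟨0, hn⟩⟩
  obtain ⟨hle, ⟨i, hi⟩, -⟩ := orderStat_facts hn ω
  refine le_antisymm (Finset.le_inf' _ _ fun j _ => (hle j).1) ?_
  rw [show orderStat n 0 ω = ω i from hi]
  exact Finset.inf'_le _ (Finset.mem_univ i)

lemma orderStat_max {n : ℕ} (hn : 0 < n) (ω : Fin n → ℝ) :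
    haveI : Nonempty (Fin n) := ⟨⟨0, hn⟩⟩
    orderStat n (n-1) ω = Finset.univ.sup' Finset.univ_nonempty ω := by
  haveI : Nonempty (Fin n) := ⟨⟨0, hn⟩⟩
  obtain ⟨hle, -, ⟨i, hi⟩⟩ := orderStat_facts hn ω
  refine le_antisymm ?_ (Finset.sup'_le _ _ fun j _ => (hle j).2)
  rw [show orderStat n (n-1) ω = ω i from hi]
  exact Finset.le_sup' _ (Finset.mem_univ i)

lemma measurable_sup'_fin {n : ℕ} [Nonempty (Fin n)] :
    Measurable fun ω : Fin n → ℝ => Finset.univ.sup' Finset.univ_nonempty ω := by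
  have : Measurable ((Finset.univ : Finset (Fin n)).sup' Finset.univ_nonempty
      (fun i (ω : Fin n → ℝ) => ω i)) :=
    Finset.sup'_induction _ _ (fun f hf g hg => hf.sup hg) (fun i _ => measurable_pi_apply i)
  convert this using 2 with ω
  simp [Finset.sup'_apply]

lemma measurable_inf'_fin {n : ℕ} [Nonempty (Fin n)] :
    Measurable fun ω : Fin n → ℝ => Finset.univ.inf' Finset.univ_nonempty ω := by
  have : Measurable ((Finset.univ : Finset (Fin n)).inf' Finset.univ_nonempty
      (fun i (ω : Fin n → ℝ) => ω i)) :=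
    Finset.inf'_induction _ _ (fun f hf g hg => hf.inf hg) (fun i _ => measurable_pi_apply i)
  convert this using 2 with ω
  simp [Finset.inf'_apply]

/-- Let `X₁, …, Xₙ`, `n ≥ 7`, be i.i.d. with density `f` on `[-L, 0)` satisfying
`0 < δ ≤ f ≤ Δ`. Then `E[ 1/(X_{(n)} - X_{(1)})⁴ ] < ∞`, where `X_{(1)}` and `X_{(n)}` are the
minimum and maximum order statistics. -/
theorem range_inv_fourth_moment_finite
    (n : ℕ) (hn : 7 ≤ n) (f : ℝ → ℝ) (L δ Δ : ℝ)
    (hL : 0 < L) (hδ : 0 < δ) (hΔ : δ ≤ Δ)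
    (hf_meas : Measurable f)
    (hf_supp : ∀ x, x ∉ Set.Ico (-L) (0 : ℝ) → f x = 0)
    (hf_lb : ∀ x ∈ Set.Ico (-L) (0 : ℝ), δ ≤ f x)
    (hf_ub : ∀ x ∈ Set.Ico (-L) (0 : ℝ), f x ≤ Δ)
    (hf_dens : ∫ x, f x = 1) :
    ∫⁻ ω, ENNReal.ofReal (((orderStat n (n - 1) ω - orderStat n 0 ω) ^ 4)⁻¹)
      ∂(Measure.pi fun _ : Fin n => volume.withDensity fun x => ENNReal.ofReal (f x)) < ⊤ := by
  have hn0 : 0 < n := by omega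
  haveI : Nonempty (Fin n) := ⟨⟨0, hn0⟩⟩
  set μ : Measure ℝ := volume.withDensity fun x => ENNReal.ofReal (f x) with hμ
  set ν : Measure (Fin n → ℝ) := Measure.pi fun _ : Fin n => μ with hν
  have hΔ0 : 0 < Δ := lt_of_lt_of_le hδ hΔ
  have hf_nonneg : ∀ x, 0 ≤ f x := by
    intro x
    by_cases hx : x ∈ Set.Ico (-L) (0:ℝ)
    · exact le_trans hδ.le (hf_lb x hx)
    · rw [hf_supp x hx]
  have hf_le : ∀ x, f x ≤ Δ := by
    intro x
    by_cases hx : x ∈ Set.Ico (-L) (0:ℝ)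
    · exact hf_ub x hx
    · rw [hf_supp x hx]; exact hΔ0.le
  -- integrability of f
  have hf_int : Integrable f := by
    refine Integrable.mono' (g := Set.indicator (Set.Icc (-L) 0) fun _ => Δ)
      ((integrableOn_const measure_Icc_lt_top.ne).integrable_indicator measurableSet_Icc)
      hf_meas.aestronglyMeasurable (Filter.Eventually.of_forall ?_)
    intro x
    by_cases hx : x ∈ Set.Ico (-L) (0:ℝ)
    · rw [Real.norm_eq_abs, abs_of_nonneg (hf_nonneg x),
        Set.indicator_of_mem (Set.mem_Icc.mpr ⟨hx.1, hx.2.le⟩)]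
      exact hf_ub x hx
    · rw [hf_supp x hx, norm_zero]
      exact Set.indicator_nonneg (fun _ _ => hΔ0.le) x
  -- μ is a probability measure
  have hμuniv : μ Set.univ = 1 := by
    rw [hμ, withDensity_apply _ MeasurableSet.univ, setLIntegral_univ,
      ← ofReal_integral_eq_lintegral_ofReal hf_int (Filter.Eventually.of_forall hf_nonneg),
      hf_dens, ENNReal.ofReal_one]
  haveI : IsProbabilityMeasure μ := ⟨hμuniv⟩
  haveI : IsProbabilityMeasure ν := by rw [hν]; infer_instance
  -- upper bound on μ of intervals
  have hμIcc : ∀ a b : ℝ, μ (Set.Icc a b) ≤ ENNReal.ofReal (Δ * (b - a)) := by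
    intro a b
    rcases le_or_gt a b with hab | hab
    · rw [hμ, withDensity_apply _ measurableSet_Icc]
      calc ∫⁻ x in Set.Icc a b, ENNReal.ofReal (f x) ∂volume
          ≤ ∫⁻ _ in Set.Icc a b, ENNReal.ofReal Δ ∂volume := by
            refine setLIntegral_mono measurable_const fun x _ =>
              ENNReal.ofReal_le_ofReal (hf_le x)
        _ = ENNReal.ofReal Δ * volume (Set.Icc a b) := setLIntegral_const _ _
        _ = ENNReal.ofReal (Δ * (b - a)) := by
            rw [Real.volume_Icc, ← ENNReal.ofReal_mul hΔ0.le]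
    · rw [Set.Icc_eq_empty (not_le.mpr hab)]
      simp
  -- the support event
  have hμcompl : μ (Set.Ico (-L) (0:ℝ))ᶜ = 0 := by
    rw [hμ, withDensity_apply _ measurableSet_Ico.compl]
    rw [setLIntegral_congr_fun measurableSet_Ico.compl
      (fun x hx => by rw [hf_supp x hx, ENNReal.ofReal_zero])]
    simp
  have hae : ∀ᵐ ω ∂ν, ∀ i, ω i ∈ Set.Ico (-L) (0:ℝ) := by
    rw [ae_all_iff]
    intro i
    rw [ae_iff]
    rw [hν]
    exact Measure.pi_eval_preimage_null (μ := fun _ : Fin n => μ) (i := i)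
      (s := (Set.Ico (-L) (0:ℝ))ᶜ) hμcompl
  -- notation for min and max
  set Mx : (Fin n → ℝ) → ℝ := fun ω => Finset.univ.sup' Finset.univ_nonempty ω with hMx
  set mn : (Fin n → ℝ) → ℝ := fun ω => Finset.univ.inf' Finset.univ_nonempty ω with hmn
  set g : (Fin n → ℝ) → ℝ := fun ω => ((Mx ω - mn ω) ^ 4)⁻¹ with hg
  have hg_meas : Measurable g :=
    ((measurable_sup'_fin.sub measurable_inf'_fin).pow_const 4).inv
  have hg_nn : ∀ ω, 0 ≤ g ω := fun ω => by positivity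
  -- tail bound
  have htail : ∀ t : ℝ, 1 < t → ν {ω | t < g ω} ≤
      ENNReal.ofReal ((L + 1) * (2 * Δ) ^ n * t ^ (-(3:ℝ)/2)) := by
    intro t ht
    have ht0 : (0:ℝ) < t := lt_trans one_pos ht
    set s : ℝ := t ^ (-(1:ℝ)/4) with hs
    have hs0 : 0 < s := Real.rpow_pos_of_pos ht0 _
    have hs4 : s ^ (4:ℕ) = t⁻¹ := by
      rw [hs, ← Real.rpow_natCast (t ^ (-(1:ℝ)/4)) 4, ← Real.rpow_mul ht0.le]
      norm_num [Real.rpow_neg_one]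
    set K : ℕ := ⌈L / s⌉₊ with hK
    set Box : ℕ → Set (Fin n → ℝ) :=
      fun k => Set.pi Set.univ fun _ : Fin n => Set.Icc (-L + k * s) (-L + k * s + 2 * s)
      with hBox
    have hGc : ν {ω : Fin n → ℝ | ¬ ∀ i, ω i ∈ Set.Ico (-L) (0:ℝ)} = 0 := by
      rw [← ae_iff]; exact hae
    have hsub : {ω | t < g ω} ∩ {ω : Fin n → ℝ | ∀ i, ω i ∈ Set.Ico (-L) (0:ℝ)} ⊆
        ⋃ k ∈ Finset.range K, Box k := by
      rintro ω ⟨hA, hG⟩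
      obtain ⟨i, -, hmi⟩ := Finset.exists_mem_eq_inf' (Finset.univ_nonempty) ω
      have hm_mem : mn ω ∈ Set.Ico (-L) (0:ℝ) := by
        rw [show mn ω = ω i from hmi]; exact hG i
      have hR0 : 0 ≤ Mx ω - mn ω := by
        have h1 : mn ω ≤ ω i := Finset.inf'_le _ (Finset.mem_univ i)
        have h2 : ω i ≤ Mx ω := Finset.le_sup' _ (Finset.mem_univ i)
        linarith
      have hRs : Mx ω - mn ω < s := by
        have h1 : ((Mx ω - mn ω) ^ 4)⁻¹⁻¹ < t⁻¹ := inv_strictAnti₀ ht0 hA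
        rw [inv_inv] at h1
        exact lt_of_pow_lt_pow_left₀ 4 hs0.le (by rw [hs4]; exact h1)
      set k : ℕ := ⌊(mn ω + L) / s⌋₊ with hk
      have hmL0 : 0 ≤ (mn ω + L) / s := div_nonneg (by linarith [hm_mem.1]) hs0.le
      have hk1 : (k:ℝ) * s ≤ mn ω + L := by
        have := Nat.floor_le hmL0
        calc (k:ℝ) * s ≤ (mn ω + L) / s * s := by
              exact mul_le_mul_of_nonneg_right this hs0.le
          _ = mn ω + L := div_mul_cancel₀ _ hs0.ne'
      have hk2 : mn ω + L < ((k:ℝ) + 1) * s := by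
        have := Nat.lt_floor_add_one ((mn ω + L) / s)
        calc mn ω + L = (mn ω + L) / s * s := (div_mul_cancel₀ _ hs0.ne').symm
          _ < ((k:ℝ) + 1) * s := by
              exact mul_lt_mul_of_pos_right (by exact_mod_cast this) hs0
      have hkK : k < K := by
        have h1 : (k:ℝ) ≤ (mn ω + L) / s := Nat.floor_le hmL0
        have h2 : (mn ω + L) / s < L / s :=
          (div_lt_div_iff_of_pos_right hs0).mpr (by linarith [hm_mem.2])
        have h3 : L / s ≤ (K:ℝ) := Nat.le_ceil _
        exact_mod_cast lt_of_le_of_lt h1 (lt_of_lt_of_le h2 h3)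
      refine Set.mem_iUnion₂.mpr ⟨k, Finset.mem_range.mpr hkK, ?_⟩
      rw [hBox]
      intro j _
      constructor
      · have h5 : mn ω ≤ ω j := Finset.inf'_le _ (Finset.mem_univ j)
        linarith
      · have h6 : ω j ≤ Mx ω := Finset.le_sup' _ (Finset.mem_univ j)
        linarith
    have hbound : ν {ω | t < g ω} ≤ (K : ENNReal) * ENNReal.ofReal ((Δ * (2 * s)) ^ n) := by
      have step1 : ν {ω | t < g ω} ≤ ν (⋃ k ∈ Finset.range K, Box k) := by
        calc ν {ω | t < g ω}
            ≤ ν (({ω | t < g ω} ∩ {ω : Fin n → ℝ | ∀ i, ω i ∈ Set.Ico (-L) (0:ℝ)}) ∪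
                {ω : Fin n → ℝ | ¬ ∀ i, ω i ∈ Set.Ico (-L) (0:ℝ)}) := by
              refine measure_mono fun ω hω => ?_
              by_cases h : ∀ i, ω i ∈ Set.Ico (-L) (0:ℝ)
              · exact Or.inl ⟨hω, h⟩
              · exact Or.inr h
          _ ≤ ν ({ω | t < g ω} ∩ {ω : Fin n → ℝ | ∀ i, ω i ∈ Set.Ico (-L) (0:ℝ)}) +
                ν {ω : Fin n → ℝ | ¬ ∀ i, ω i ∈ Set.Ico (-L) (0:ℝ)} := measure_union_le _ _
          _ = ν ({ω | t < g ω} ∩ {ω : Fin n → ℝ | ∀ i, ω i ∈ Set.Ico (-L) (0:ℝ)}) := by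
              rw [hGc, add_zero]
          _ ≤ ν (⋃ k ∈ Finset.range K, Box k) := measure_mono hsub
      have step2 : ∀ k, ν (Box k) ≤ ENNReal.ofReal ((Δ * (2 * s)) ^ n) := by
        intro k
        have : ν (Box k) = μ (Set.Icc (-L + k * s) (-L + k * s + 2 * s)) ^ n := by
          rw [hν, hBox, Measure.pi_pi, Finset.prod_const, Finset.card_univ, Fintype.card_fin]
        rw [this, ENNReal.ofReal_pow (by positivity)]
        refine pow_le_pow_left' ?_ n
        have := hμIcc (-L + k * s) (-L + k * s + 2 * s)
        convert this using 2
        · rfl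
        · ring
      calc ν {ω | t < g ω} ≤ ν (⋃ k ∈ Finset.range K, Box k) := step1
        _ ≤ ∑ k ∈ Finset.range K, ν (Box k) := measure_biUnion_finset_le _ _
        _ ≤ ∑ _k ∈ Finset.range K, ENNReal.ofReal ((Δ * (2 * s)) ^ n) :=
            Finset.sum_le_sum fun k _ => step2 k
        _ = (K : ENNReal) * ENNReal.ofReal ((Δ * (2 * s)) ^ n) := by
            rw [Finset.sum_const, Finset.card_range, nsmul_eq_mul]
    -- now the real-number estimate
    have hreal : (K : ℝ) * (Δ * (2 * s)) ^ n ≤ (L + 1) * (2 * Δ) ^ n * t ^ (-(3:ℝ)/2) := by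
      have ht14 : (1:ℝ) ≤ t ^ ((1:ℝ)/4) := by
        have := Real.rpow_le_rpow_of_exponent_le ht.le (show (0:ℝ) ≤ 1/4 by norm_num)
        rwa [Real.rpow_zero] at this
      have hsinv : 1 / s = t ^ ((1:ℝ)/4) := by
        rw [hs, one_div, ← Real.rpow_neg ht0.le]
        norm_num
      have hKle : (K : ℝ) ≤ (L + 1) * t ^ ((1:ℝ)/4) := by
        have h1 : (K : ℝ) < L / s + 1 := Nat.ceil_lt_add_one (div_nonneg hL.le hs0.le)
        have h2 : L / s = L * t ^ ((1:ℝ)/4) := by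
          rw [div_eq_mul_one_div, hsinv]
        nlinarith [hL.le, ht14]
      have hsn : s ^ n = t ^ (-(n:ℝ)/4) := by
        rw [hs, ← Real.rpow_natCast (t ^ (-(1:ℝ)/4)) n, ← Real.rpow_mul ht0.le]
        ring_nf
      have hpow : (Δ * (2 * s)) ^ n = (2 * Δ) ^ n * t ^ (-(n:ℝ)/4) := by
        rw [show Δ * (2 * s) = (2 * Δ) * s by ring, mul_pow, hsn]
      have hrpow_nn : (0:ℝ) ≤ t ^ (-(n:ℝ)/4) := (Real.rpow_pos_of_pos ht0 _).le
      have hexp : t ^ ((1:ℝ)/4) * t ^ (-(n:ℝ)/4) ≤ t ^ (-(3:ℝ)/2) := by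
        rw [← Real.rpow_add ht0]
        refine Real.rpow_le_rpow_of_exponent_le ht.le ?_
        have h7 : (7:ℝ) ≤ (n:ℝ) := by exact_mod_cast hn
        linarith
      calc (K : ℝ) * (Δ * (2 * s)) ^ n
          ≤ ((L + 1) * t ^ ((1:ℝ)/4)) * ((2 * Δ) ^ n * t ^ (-(n:ℝ)/4)) := by
            refine mul_le_mul hKle (le_of_eq hpow) (by positivity) (by positivity)
        _ = (L + 1) * (2 * Δ) ^ n * (t ^ ((1:ℝ)/4) * t ^ (-(n:ℝ)/4)) := by ring
        _ ≤ (L + 1) * (2 * Δ) ^ n * t ^ (-(3:ℝ)/2) := by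
            refine mul_le_mul_of_nonneg_left hexp (by positivity)
    calc ν {ω | t < g ω} ≤ (K : ENNReal) * ENNReal.ofReal ((Δ * (2 * s)) ^ n) := hbound
      _ = ENNReal.ofReal ((K : ℝ) * (Δ * (2 * s)) ^ n) := by
          rw [ENNReal.ofReal_mul (Nat.cast_nonneg K), ENNReal.ofReal_natCast]
      _ ≤ ENNReal.ofReal ((L + 1) * (2 * Δ) ^ n * t ^ (-(3:ℝ)/2)) :=
          ENNReal.ofReal_le_ofReal hreal
  -- rewrite the integrand
  have hrw : ∀ ω : Fin n → ℝ, orderStat n (n-1) ω - orderStat n 0 ω = Mx ω - mn ω := by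
    intro ω
    rw [hMx, hmn]
    rw [orderStat_max hn0, orderStat_min hn0]
  have hint_eq : ∫⁻ ω, ENNReal.ofReal (((orderStat n (n - 1) ω - orderStat n 0 ω) ^ 4)⁻¹) ∂ν
      = ∫⁻ t in Set.Ioi (0:ℝ), ν {ω | t < g ω} := by
    rw [show (fun ω => ENNReal.ofReal (((orderStat n (n - 1) ω - orderStat n 0 ω) ^ 4)⁻¹))
        = fun ω => ENNReal.ofReal (g ω) from funext fun ω => by rw [hg, hrw ω]]
    exact lintegral_eq_lintegral_meas_lt ν (Filter.Eventually.of_forall hg_nn)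
      hg_meas.aemeasurable
  rw [hint_eq]
  have hsplit : Set.Ioi (0:ℝ) = Set.Ioc 0 1 ∪ Set.Ioi 1 :=
    (Set.Ioc_union_Ioi_eq_Ioi zero_le_one).symm
  rw [hsplit, lintegral_union measurableSet_Ioi (Set.Ioc_disjoint_Ioi le_rfl)]
  have h1 : ∫⁻ t in Set.Ioc (0:ℝ) 1, ν {ω | t < g ω} < ⊤ := by
    calc ∫⁻ t in Set.Ioc (0:ℝ) 1, ν {ω | t < g ω}
        ≤ ∫⁻ _ in Set.Ioc (0:ℝ) 1, 1 :=
          lintegral_mono fun t => prob_le_one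
      _ = volume (Set.Ioc (0:ℝ) 1) := by rw [setLIntegral_const, one_mul]
      _ < ⊤ := by rw [Real.volume_Ioc]; exact ENNReal.ofReal_lt_top
  have h2 : ∫⁻ t in Set.Ioi (1:ℝ), ν {ω | t < g ω} < ⊤ := by
    have hInt : IntegrableOn (fun t : ℝ => (L + 1) * (2 * Δ) ^ n * t ^ (-(3:ℝ)/2))
        (Set.Ioi (1:ℝ)) := by
      exact (integrableOn_Ioi_rpow_of_lt (by norm_num) one_pos).const_mul _
    calc ∫⁻ t in Set.Ioi (1:ℝ), ν {ω | t < g ω}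
        ≤ ∫⁻ t in Set.Ioi (1:ℝ),
            ENNReal.ofReal ((L + 1) * (2 * Δ) ^ n * t ^ (-(3:ℝ)/2)) := by
          refine lintegral_mono_ae ?_
          filter_upwards [self_mem_ae_restrict (measurableSet_Ioi : MeasurableSet (Set.Ioi (1:ℝ)))]
            with t ht using htail t ht
      _ < ⊤ := hInt.lintegral_lt_top
  exact ENNReal.add_lt_top.mpr ⟨h1, h2⟩
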